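/- Let m ≥ 1, x_k = k/2^m, and y_k = φ₂(k) for k = 0,...,2^m−1. Then ∑_{k,l=0}^{2^m−1} x_k·|y_k − y_l| = (2^m − 1)²(2^m + 1)/(6·2^m). -/

import Mathlib

/-- The base-2 digit reversal (radical inverse) function. -/
noncomputable def phi2 (k : ℕ) : ℝ :=
  ∑ i ∈ Finset.range (k + 1), if Nat.testBit k i then (1 : ℝ) / 2 ^ (i + 1) else 0

/-- Bit reversal of the lowest `m` bits. -/
def revm (m k : ℕ) : ℕ :=
  ∑ i ∈ Finset.range m, if Nat.testBit k i then 2 ^ (m - 1 - i) else 0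

lemma revm_succ (m k : ℕ) : revm (m + 1) k = k % 2 * 2 ^ m + revm m (k / 2) := by
  unfold revm
  rw [Finset.sum_range_succ']
  have h0 : (if Nat.testBit k 0 then 2 ^ (m + 1 - 1 - 0) else 0) = k % 2 * 2 ^ m := by
    rcases Nat.mod_two_eq_zero_or_one k with h | h <;>
      simp [Nat.testBit_zero, h]
  rw [h0, Nat.add_comm]
  congr 1
  apply Finset.sum_congr rfl
  intro i hi
  have he : m + 1 - 1 - (i + 1) = m - 1 - i := by omega
  rw [Nat.testBit_succ, he]

lemma revm_lt (m k : ℕ) : revm m k < 2 ^ m := by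
  induction m generalizing k with
  | zero => simp [revm]
  | succ n ih =>
    have h := ih (k / 2)
    have h2 : k % 2 < 2 := Nat.mod_lt _ (by norm_num)
    have hp : 2 ^ (n + 1) = 2 * 2 ^ n := by ring
    rw [revm_succ]
    nlinarith [Nat.mod_two_eq_zero_or_one k]

lemma revm_inj (m : ℕ) : ∀ k < 2 ^ m, ∀ k' < 2 ^ m, revm m k = revm m k' → k = k' := by
  induction m with
  | zero => intro k hk k' hk' _; omega
  | succ n ih =>
    intro k hk k' hk' h
    rw [revm_succ, revm_succ] at h
    have h1 := revm_lt n (k / 2)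
    have h2 := revm_lt n (k' / 2)
    have hm : k % 2 = k' % 2 ∧ revm n (k / 2) = revm n (k' / 2) := by
      rcases Nat.mod_two_eq_zero_or_one k with ha | ha <;>
        rcases Nat.mod_two_eq_zero_or_one k' with hb | hb <;>
          rw [ha, hb] at h <;> simp only [zero_mul, one_mul, zero_add] at h <;> omega
    have hp : 2 ^ (n + 1) = 2 * 2 ^ n := by ring
    have := ih (k / 2) (by omega) (k' / 2) (by omega) hm.2
    omega

lemma revm_compl (m : ℕ) : ∀ k < 2 ^ m, revm m (2 ^ m - 1 - k) = 2 ^ m - 1 - revm m k := by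
  induction m with
  | zero => intro k hk; interval_cases k; simp [revm]
  | succ n ih =>
    intro k hk
    have hp : 2 ^ (n + 1) = 2 * 2 ^ n := by ring
    have hdiv : (2 ^ (n + 1) - 1 - k) / 2 = 2 ^ n - 1 - k / 2 := by omega
    have hmod : (2 ^ (n + 1) - 1 - k) % 2 = 1 - k % 2 := by omega
    rw [revm_succ, revm_succ, hdiv, hmod, ih (k / 2) (by omega)]
    have h1 := revm_lt n (k / 2)
    rcases Nat.mod_two_eq_zero_or_one k with ha | ha <;> simp [ha] <;> omega

lemma phi2_eq_range (n k : ℕ) (hk : k < 2 ^ n) :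
    phi2 k = ∑ i ∈ Finset.range n, if Nat.testBit k i then (1 : ℝ) / 2 ^ (i + 1) else 0 := by
  have key : ∀ a : ℕ, k < 2 ^ a → a ≤ max (k + 1) n →
      ∑ i ∈ Finset.range (max (k + 1) n), (if Nat.testBit k i then (1 : ℝ) / 2 ^ (i + 1) else 0)
      = ∑ i ∈ Finset.range a, if Nat.testBit k i then (1 : ℝ) / 2 ^ (i + 1) else 0 := by
    intro a ha ha2
    symm
    apply Finset.sum_subset (Finset.range_subset_range.mpr ha2)
    intro i hi1 hi2
    rw [Finset.mem_range] at hi1 hi2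
    have hb : Nat.testBit k i = false :=
      Nat.testBit_lt_two_pow
        (lt_of_lt_of_le ha (Nat.pow_le_pow_right (by norm_num) (by omega)))
    simp [hb]
  have hk1 : k < 2 ^ (k + 1) :=
    lt_of_lt_of_le (Nat.lt_two_pow_self (n := k)) (Nat.pow_le_pow_right (by norm_num) (by omega))
  unfold phi2
  rw [← key (k + 1) hk1 (le_max_left _ _), key n hk (le_max_right _ _)]

lemma phi2_eq (m k : ℕ) (hk : k < 2 ^ m) : phi2 k = (revm m k : ℝ) / 2 ^ m := by
  rw [phi2_eq_range m k hk]
  unfold revm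
  push_cast
  rw [Finset.sum_div]
  apply Finset.sum_congr rfl
  intro i hi
  rw [Finset.mem_range] at hi
  split
  · rw [div_eq_div_iff (by positivity) (by positivity), one_mul, ← pow_add]
    congr 1
    omega
  · simp

lemma gauss_sum (n : ℕ) : ∑ i ∈ Finset.range n, (i : ℝ) = n * (n - 1) / 2 := by
  induction n with
  | zero => simp
  | succ p ihp => rw [Finset.sum_range_succ, ihp]; push_cast; ring

lemma sum_abs_sub (n : ℕ) :
    ∑ i ∈ Finset.range n, ∑ j ∈ Finset.range n, |(i : ℝ) - j| = n * (n ^ 2 - 1) / 3 := by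
  induction n with
  | zero => simp
  | succ n ih =>
    have cross : ∀ i ∈ Finset.range n, |(i : ℝ) - n| = (n : ℝ) - i := by
      intro i hi
      rw [Finset.mem_range] at hi
      have h' : (i : ℝ) < n := by exact_mod_cast hi
      rw [abs_sub_comm]
      exact abs_of_nonneg (by linarith)
    have cross2 : ∀ j ∈ Finset.range n, |(n : ℝ) - j| = (n : ℝ) - j := by
      intro j hj
      rw [Finset.mem_range] at hj
      have h' : (j : ℝ) < n := by exact_mod_cast hj
      exact abs_of_nonneg (by linarith)
    have e1 : ∀ i ∈ Finset.range n, ∑ j ∈ Finset.range (n + 1), |(i : ℝ) - j|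
        = (∑ j ∈ Finset.range n, |(i : ℝ) - j|) + ((n : ℝ) - i) := by
      intro i hi
      rw [Finset.sum_range_succ, cross i hi]
    have e2 : ∑ j ∈ Finset.range (n + 1), |(n : ℝ) - j|
        = ∑ j ∈ Finset.range n, ((n : ℝ) - j) := by
      rw [Finset.sum_range_succ, sub_self, abs_zero, add_zero, Finset.sum_congr rfl cross2]
    rw [Finset.sum_range_succ, Finset.sum_congr rfl e1, e2, Finset.sum_add_distrib, ih,
      Finset.sum_sub_distrib, gauss_sum]
    simp only [Finset.sum_const, Finset.card_range, nsmul_eq_mul]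
    push_cast
    ring

theorem hammersley_S7 (m : ℕ) (hm : 1 ≤ m) :
    ∑ k ∈ Finset.range (2 ^ m), ∑ l ∈ Finset.range (2 ^ m),
      ((k : ℝ) / 2 ^ m) * |phi2 k - phi2 l|
      = ((2:ℝ) ^ m - 1) ^ 2 * ((2:ℝ) ^ m + 1) / (6 * 2 ^ m) := by
  set N := 2 ^ m with hN
  have hN1 : 1 ≤ N := Nat.one_le_two_pow
  have hx : ((N : ℕ) : ℝ) = (2 : ℝ) ^ m := by rw [hN]; push_cast; ring
  have hxpos : (0 : ℝ) < (2 : ℝ) ^ m := by positivity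
  set S := ∑ k ∈ Finset.range N, ∑ l ∈ Finset.range N,
      (k : ℝ) * |(revm m k : ℝ) - (revm m l : ℝ)| with hS
  set T := ∑ k ∈ Finset.range N, ∑ l ∈ Finset.range N,
      |(revm m k : ℝ) - (revm m l : ℝ)| with hT
  -- T equals the sum over all pairs of integers
  have himg : (Finset.range N).image (revm m) = Finset.range N := by
    apply Finset.eq_of_subset_of_card_le
    · intro j hj
      rw [Finset.mem_image] at hj
      obtain ⟨k, _, rfl⟩ := hj
      exact Finset.mem_range.mpr (revm_lt m k)
    · rw [Finset.card_image_of_injOn, Finset.card_range]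
      intro a ha b hb h
      exact revm_inj m a (Finset.mem_range.mp ha) b (Finset.mem_range.mp hb) h
  have hinj : ∀ x ∈ Finset.range N, ∀ y ∈ Finset.range N, revm m x = revm m y → x = y :=
    fun a ha b hb h => revm_inj m a (Finset.mem_range.mp ha) b (Finset.mem_range.mp hb) h
  have hreindex : ∀ f : ℕ → ℝ, ∑ j ∈ Finset.range N, f j = ∑ k ∈ Finset.range N, f (revm m k) := by
    intro f
    nth_rewrite 1 [← himg]
    exact Finset.sum_image hinj
  have hTval : T = (2:ℝ) ^ m * (((2:ℝ) ^ m) ^ 2 - 1) / 3 := by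
    have h1 : T = ∑ i ∈ Finset.range N, ∑ j ∈ Finset.range N, |(i : ℝ) - j| := by
      rw [hT,
        ← hreindex (fun i => ∑ j ∈ Finset.range N, |(i : ℝ) - (revm m j : ℝ)|)]
      apply Finset.sum_congr rfl
      intro i _
      exact (hreindex fun j => |(i : ℝ) - (j : ℝ)|).symm
    rw [h1, sum_abs_sub, hx]
  -- symmetry: 2S = (N-1) T
  have hsym : 2 * S = ((2:ℝ) ^ m - 1) * T := by
    have hS2 : S = ∑ k ∈ Finset.range N, ∑ l ∈ Finset.range N,
        (((2:ℝ) ^ m - 1) - k) * |(revm m k : ℝ) - (revm m l : ℝ)| := by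
      conv_lhs => rw [hS,
        ← Finset.sum_range_reflect (fun k => ∑ l ∈ Finset.range N,
          (k : ℝ) * |(revm m k : ℝ) - (revm m l : ℝ)|) N]
      apply Finset.sum_congr rfl
      intro k hk
      rw [← Finset.sum_range_reflect (fun l =>
        ((N - 1 - k : ℕ) : ℝ) * |(revm m (N - 1 - k) : ℝ) - (revm m l : ℝ)|) N]
      apply Finset.sum_congr rfl
      intro l hl
      rw [Finset.mem_range] at hk hl
      have hk' := revm_lt m k
      have hl' := revm_lt m l
      rw [revm_compl m k hk, revm_compl m l hl]
      have hc1 : ((N - 1 - k : ℕ) : ℝ) = ((2:ℝ) ^ m - 1) - k := by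
        rw [Nat.cast_sub (by omega), Nat.cast_sub (by omega), Nat.cast_one, hx]
      have hc2 : ((N - 1 - revm m k : ℕ) : ℝ) = ((2:ℝ) ^ m - 1) - (revm m k : ℝ) := by
        rw [Nat.cast_sub (by omega), Nat.cast_sub (by omega), Nat.cast_one, hx]
      have hc3 : ((N - 1 - revm m l : ℕ) : ℝ) = ((2:ℝ) ^ m - 1) - (revm m l : ℝ) := by
        rw [Nat.cast_sub (by omega), Nat.cast_sub (by omega), Nat.cast_one, hx]
      rw [hc1, hc2, hc3]
      congr 1
      rw [show (((2:ℝ) ^ m - 1) - (revm m k : ℝ)) - (((2:ℝ) ^ m - 1) - (revm m l : ℝ))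
          = (revm m l : ℝ) - (revm m k : ℝ) by ring, abs_sub_comm]
    calc 2 * S = S + S := by ring
    _ = ∑ k ∈ Finset.range N, ∑ l ∈ Finset.range N,
        ((2:ℝ) ^ m - 1) * |(revm m k : ℝ) - (revm m l : ℝ)| := by
        nth_rewrite 1 [hS2]
        rw [hS, ← Finset.sum_add_distrib]
        apply Finset.sum_congr rfl
        intro k _
        rw [← Finset.sum_add_distrib]
        apply Finset.sum_congr rfl
        intro l _
        ring
    _ = ((2:ℝ) ^ m - 1) * T := by
        rw [hT, Finset.mul_sum]
        apply Finset.sum_congr rfl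
        intro k _
        rw [Finset.mul_sum]
  -- rewrite the goal sum as S / (2^m)^2
  have hgoal : ∑ k ∈ Finset.range N, ∑ l ∈ Finset.range N,
      ((k : ℝ) / 2 ^ m) * |phi2 k - phi2 l| = S / ((2:ℝ) ^ m * 2 ^ m) := by
    rw [hS, Finset.sum_div]
    apply Finset.sum_congr rfl
    intro k hk
    rw [Finset.sum_div]
    apply Finset.sum_congr rfl
    intro l hl
    rw [Finset.mem_range] at hk hl
    rw [phi2_eq m k hk, phi2_eq m l hl, div_sub_div_same, abs_div, abs_of_pos hxpos]
    field_simp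
  rw [hgoal]
  have hSval : S = ((2:ℝ) ^ m - 1) * ((2:ℝ) ^ m * (((2:ℝ) ^ m) ^ 2 - 1) / 3) / 2 := by
    rw [← hTval]; linarith
  rw [hSval]
  have hne : (2:ℝ) ^ m ≠ 0 := ne_of_gt hxpos
  field_simp
  ring
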